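/- Suppose 𝕏 and 𝕌 are convex, β ∈ [0, 1], and P, Γ, Θ are symmetric positive semidefinite. Then on T(β) the function m is real-valued (finite) and convex: for all x₁, x₂ ∈ T(β) and t ∈ [0, 1], m(t x₁ + (1−t) x₂) ≤ t m(x₁) + (1−t) m(x₂). (Proposition 2, statement 1.) -/

import Mathlib

open Matrix

noncomputable section

variable {n nu nf ne nv : ℕ}

/-- The polytope `P(y) = {x | F x ≤ y}` (entrywise inequalities). -/
def polySet (F : Matrix (Fin nf) (Fin n) ℝ) (y : Fin nf → ℝ) : Set (Fin n → ℝ) :=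
  {x | F *ᵥ x ≤ y}

/-- The set `S` of triples `(y, v, y⁺)` from the paper. -/
def STriple (A : Matrix (Fin n) (Fin n) ℝ) (B : Matrix (Fin n) (Fin nu) ℝ)
    (X : Set (Fin n → ℝ)) (U : Set (Fin nu → ℝ))
    (F : Matrix (Fin nf) (Fin n) ℝ) (E : Matrix (Fin ne) (Fin nf) ℝ)
    (V : Fin nv → Matrix (Fin n) (Fin nf) ℝ) :
    Set ((Fin nf → ℝ) × (Fin nv → Fin nu → ℝ) × (Fin nf → ℝ)) :=
  {p | E *ᵥ p.1 ≤ 0 ∧ ∀ i : Fin nv,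
      F *ᵥ (A *ᵥ ((V i) *ᵥ p.1) + B *ᵥ (p.2.1 i)) ≤ p.2.2 ∧
      (V i) *ᵥ p.1 ∈ X ∧ p.2.1 i ∈ U}

/-- The set `Y_LQR` of parameters of invariant cc-polytopes for the LQR feedback. -/
def YLQR (A : Matrix (Fin n) (Fin n) ℝ) (B : Matrix (Fin n) (Fin nu) ℝ)
    (K : Matrix (Fin nu) (Fin n) ℝ)
    (X : Set (Fin n → ℝ)) (U : Set (Fin nu → ℝ))
    (F : Matrix (Fin nf) (Fin n) ℝ) (E : Matrix (Fin ne) (Fin nf) ℝ)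
    (V : Fin nv → Matrix (Fin n) (Fin nf) ℝ) : Set (Fin nf → ℝ) :=
  {ys | E *ᵥ ys ≤ 0 ∧ ∀ i : Fin nv,
      F *ᵥ ((A + B * K) *ᵥ ((V i) *ᵥ ys)) ≤ ys ∧
      (V i) *ᵥ ys ∈ X ∧ K *ᵥ ((V i) *ᵥ ys) ∈ U}

/-- The terminal region `T(β)`. -/
def TSet (β : ℝ) (A : Matrix (Fin n) (Fin n) ℝ) (B : Matrix (Fin n) (Fin nu) ℝ)
    (K : Matrix (Fin nu) (Fin n) ℝ)
    (X : Set (Fin n → ℝ)) (U : Set (Fin nu → ℝ))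
    (F : Matrix (Fin nf) (Fin n) ℝ) (E : Matrix (Fin ne) (Fin nf) ℝ)
    (V : Fin nv → Matrix (Fin n) (Fin nf) ℝ) : Set (Fin n → ℝ) :=
  {x | ∃ (y ys : Fin nf → ℝ) (vv : Fin nv → Fin nu → ℝ),
      F *ᵥ x ≤ y ∧ ys ∈ YLQR A B K X U F E V ∧
      (y, vv, ys + β • (y - ys)) ∈ STriple A B X U F E V}

/-- The set `T̂_LQR`, the union of all invariant cc-polytopes for the LQR feedback. -/
def THatLQR (A : Matrix (Fin n) (Fin n) ℝ) (B : Matrix (Fin n) (Fin nu) ℝ)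
    (K : Matrix (Fin nu) (Fin n) ℝ)
    (X : Set (Fin n → ℝ)) (U : Set (Fin nu → ℝ))
    (F : Matrix (Fin nf) (Fin n) ℝ) (E : Matrix (Fin ne) (Fin nf) ℝ)
    (V : Fin nv → Matrix (Fin n) (Fin nf) ℝ) : Set (Fin n → ℝ) :=
  {x | ∃ ys ∈ YLQR A B K X U F E V, F *ᵥ x ≤ ys}

/-- The piecewise quadratic terminal cost `m(x)`, as an infimum in `ℝ ∪ {±∞}`
(the infimum over the empty set is `+∞`). -/
def mcost (β : ℝ) (A : Matrix (Fin n) (Fin n) ℝ) (B : Matrix (Fin n) (Fin nu) ℝ)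
    (K : Matrix (Fin nu) (Fin n) ℝ)
    (X : Set (Fin n → ℝ)) (U : Set (Fin nu → ℝ))
    (F : Matrix (Fin nf) (Fin n) ℝ) (E : Matrix (Fin ne) (Fin nf) ℝ)
    (V : Fin nv → Matrix (Fin n) (Fin nf) ℝ)
    (P : Matrix (Fin n) (Fin n) ℝ) (Γ : Matrix (Fin nf) (Fin nf) ℝ)
    (Θ : Matrix (Fin nu) (Fin nu) ℝ) (x : Fin n → ℝ) : EReal :=
  sInf {c : EReal | ∃ (y ys : Fin nf → ℝ) (vv : Fin nv → Fin nu → ℝ),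
    F *ᵥ x ≤ y ∧ ys ∈ YLQR A B K X U F E V ∧
    (y, vv, ys + β • (y - ys)) ∈ STriple A B X U F E V ∧
    c = ((x ⬝ᵥ (P *ᵥ x) + (y - ys) ⬝ᵥ (Γ *ᵥ (y - ys)) +
      ∑ i : Fin nv, ((vv i - K *ᵥ ((V i) *ᵥ y)) ⬝ᵥ
        (Θ *ᵥ (vv i - K *ᵥ ((V i) *ᵥ y)))) : ℝ) : EReal)}

/-- The quadratic stage cost `ℓ(x,u) = xᵀQx + 2xᵀSu + uᵀRu`. -/
def stageCost (Q : Matrix (Fin n) (Fin n) ℝ) (Sm : Matrix (Fin n) (Fin nu) ℝ)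
    (R : Matrix (Fin nu) (Fin nu) ℝ) (x : Fin n → ℝ) (u : Fin nu → ℝ) : ℝ :=
  x ⬝ᵥ (Q *ᵥ x) + 2 * (x ⬝ᵥ (Sm *ᵥ u)) + u ⬝ᵥ (R *ᵥ u)

/-- `(P, K)` is a Riccati pair: `P` symmetric, the LQR gain relation, and the DARE. -/
def IsRiccatiPair (A : Matrix (Fin n) (Fin n) ℝ) (B : Matrix (Fin n) (Fin nu) ℝ)
    (Q : Matrix (Fin n) (Fin n) ℝ) (Sm : Matrix (Fin n) (Fin nu) ℝ)
    (R : Matrix (Fin nu) (Fin nu) ℝ)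
    (P : Matrix (Fin n) (Fin n) ℝ) (K : Matrix (Fin nu) (Fin n) ℝ) : Prop :=
  P.IsSymm ∧ (R + Bᵀ * P * B) * K = -(Aᵀ * P * B + Sm)ᵀ ∧
    P = Aᵀ * P * A + Q + (Aᵀ * P * B + Sm) * K

private lemma quad_conv {k : ℕ} {M : Matrix (Fin k) (Fin k) ℝ} (hM : M.PosSemidef)
    (z₁ z₂ : Fin k → ℝ) {t : ℝ} (ht0 : 0 ≤ t) (ht1 : t ≤ 1) :
    (t • z₁ + (1 - t) • z₂) ⬝ᵥ (M *ᵥ (t • z₁ + (1 - t) • z₂)) ≤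
      t * (z₁ ⬝ᵥ (M *ᵥ z₁)) + (1 - t) * (z₂ ⬝ᵥ (M *ᵥ z₂)) := by
  have hd := hM.dotProduct_mulVec_nonneg (z₁ - z₂)
  simp only [star_trivial, Matrix.mulVec_sub, sub_dotProduct,
    dotProduct_sub] at hd
  simp only [Matrix.mulVec_add, Matrix.mulVec_smul, dotProduct_add,
    add_dotProduct, smul_dotProduct, dotProduct_smul, smul_eq_mul]
  nlinarith [mul_nonneg (mul_nonneg ht0 (sub_nonneg.2 ht1)) hd]

/-- on `T(β)` the terminal cost `m` is real-valued and convex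
(Proposition 2, statement 1). -/
theorem mcost_finite_and_convexOn
    (A : Matrix (Fin n) (Fin n) ℝ) (B : Matrix (Fin n) (Fin nu) ℝ)
    (K : Matrix (Fin nu) (Fin n) ℝ)
    (X : Set (Fin n → ℝ)) (U : Set (Fin nu → ℝ))
    (F : Matrix (Fin nf) (Fin n) ℝ) (E : Matrix (Fin ne) (Fin nf) ℝ)
    (V : Fin nv → Matrix (Fin n) (Fin nf) ℝ)
    (P : Matrix (Fin n) (Fin n) ℝ) (Γ : Matrix (Fin nf) (Fin nf) ℝ)
    (Θ : Matrix (Fin nu) (Fin nu) ℝ)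
    (hX : Convex ℝ X) (hU : Convex ℝ U)
    (β : ℝ) (hβ0 : 0 ≤ β) (hβ1 : β ≤ 1)
    (hP : P.PosSemidef) (hΓ : Γ.PosSemidef) (hΘ : Θ.PosSemidef) :
    (∀ x ∈ TSet β A B K X U F E V,
        ∃ r : ℝ, mcost β A B K X U F E V P Γ Θ x = (r : EReal)) ∧
    (∀ x₁ ∈ TSet β A B K X U F E V, ∀ x₂ ∈ TSet β A B K X U F E V,
      ∀ t : ℝ, 0 ≤ t → t ≤ 1 →
        mcost β A B K X U F E V P Γ Θ (t • x₁ + (1 - t) • x₂) ≤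
          (t : EReal) * mcost β A B K X U F E V P Γ Θ x₁ +
            ((1 - t : ℝ) : EReal) * mcost β A B K X U F E V P Γ Θ x₂) := by
    classical
  set xv := V with hxv  -- dummy to avoid unused warnings
  clear hxv
  -- the real-valued objective
  let obj : (Fin n → ℝ) → (Fin nf → ℝ) → (Fin nf → ℝ) → (Fin nv → Fin nu → ℝ) → ℝ :=
    fun x y ys vv => x ⬝ᵥ (P *ᵥ x) + (y - ys) ⬝ᵥ (Γ *ᵥ (y - ys)) +
      ∑ i : Fin nv, ((vv i - K *ᵥ ((V i) *ᵥ y)) ⬝ᵥ (Θ *ᵥ (vv i - K *ᵥ ((V i) *ᵥ y))))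
  let Feas : (Fin n → ℝ) → (Fin nf → ℝ) → (Fin nf → ℝ) → (Fin nv → Fin nu → ℝ) → Prop :=
    fun x y ys vv => F *ᵥ x ≤ y ∧ ys ∈ YLQR A B K X U F E V ∧
      (y, vv, ys + β • (y - ys)) ∈ STriple A B X U F E V
  let SR : (Fin n → ℝ) → Set ℝ :=
    fun x => {c | ∃ y ys vv, Feas x y ys vv ∧ c = obj x y ys vv}
  have hmc : ∀ x, mcost β A B K X U F E V P Γ Θ x
      = sInf ((fun r : ℝ => (r : EReal)) '' SR x) := by
    intro x
    unfold mcost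
    congr 1
    ext c
    constructor
    · rintro ⟨y, ys, vv, h1, h2, h3, rfl⟩
      exact ⟨_, ⟨y, ys, vv, ⟨h1, h2, h3⟩, rfl⟩, rfl⟩
    · rintro ⟨r, ⟨y, ys, vv, ⟨h1, h2, h3⟩, rfl⟩, rfl⟩
      exact ⟨y, ys, vv, h1, h2, h3, rfl⟩
  have hnn : ∀ x y ys vv, 0 ≤ obj x y ys vv := by
    intro x y ys vv
    have h1 := hP.dotProduct_mulVec_nonneg x
    have h2 := hΓ.dotProduct_mulVec_nonneg (y - ys)
    have h3 : 0 ≤ ∑ i : Fin nv,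
        ((vv i - K *ᵥ ((V i) *ᵥ y)) ⬝ᵥ (Θ *ᵥ (vv i - K *ᵥ ((V i) *ᵥ y)))) :=
      Finset.sum_nonneg fun i _ => by simpa only [star_trivial] using hΘ.dotProduct_mulVec_nonneg _
    simp only [star_trivial] at h1 h2
    simp only [obj]
    linarith
  have hbdd : ∀ x, BddBelow (SR x) := by
    intro x
    refine ⟨0, ?_⟩
    rintro c ⟨y, ys, vv, _, rfl⟩
    exact hnn x y ys vv
  have hne : ∀ x ∈ TSet β A B K X U F E V, (SR x).Nonempty := by
    rintro x ⟨y, ys, vv, h1, h2, h3⟩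
    exact ⟨obj x y ys vv, y, ys, vv, ⟨h1, h2, h3⟩, rfl⟩
  have hreal : ∀ x ∈ TSet β A B K X U F E V,
      mcost β A B K X U F E V P Γ Θ x = ((sInf (SR x) : ℝ) : EReal) := by
    intro x hx
    rw [hmc x, ← Monotone.map_csInf_of_continuousAt
      (continuous_coe_real_ereal.continuousAt)
      (fun a b h => EReal.coe_le_coe_iff.2 h) (hne x hx) (hbdd x)]
  refine ⟨fun x hx => ⟨_, hreal x hx⟩, ?_⟩
  intro x₁ hx₁ x₂ hx₂ t ht0 ht1
  have ht1' : 0 ≤ 1 - t := by linarith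
  have hvle : ∀ {k : ℕ} {a₁ a₂ b₁ b₂ : Fin k → ℝ}, a₁ ≤ b₁ → a₂ ≤ b₂ →
      t • a₁ + (1 - t) • a₂ ≤ t • b₁ + (1 - t) • b₂ := by
    intro k a₁ a₂ b₁ b₂ h₁ h₂ i
    simp only [Pi.add_apply, Pi.smul_apply, smul_eq_mul]
    exact add_le_add (mul_le_mul_of_nonneg_left (h₁ i) ht0)
      (mul_le_mul_of_nonneg_left (h₂ i) ht1')
  have hlin : ∀ {k l : ℕ} (M : Matrix (Fin k) (Fin l) ℝ) (a b : Fin l → ℝ),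
      M *ᵥ (t • a + (1 - t) • b) = t • (M *ᵥ a) + (1 - t) • (M *ᵥ b) := by
    intro k l M a b
    rw [Matrix.mulVec_add, Matrix.mulVec_smul, Matrix.mulVec_smul]
  -- combination of feasible points
  have key : ∀ y₁ ys₁ vv₁ y₂ ys₂ vv₂, Feas x₁ y₁ ys₁ vv₁ → Feas x₂ y₂ ys₂ vv₂ →
      Feas (t • x₁ + (1 - t) • x₂) (t • y₁ + (1 - t) • y₂) (t • ys₁ + (1 - t) • ys₂)
        (fun i => t • vv₁ i + (1 - t) • vv₂ i) ∧
      obj (t • x₁ + (1 - t) • x₂) (t • y₁ + (1 - t) • y₂) (t • ys₁ + (1 - t) • ys₂)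
          (fun i => t • vv₁ i + (1 - t) • vv₂ i)
        ≤ t * obj x₁ y₁ ys₁ vv₁ + (1 - t) * obj x₂ y₂ ys₂ vv₂ := by
    rintro y₁ ys₁ vv₁ y₂ ys₂ vv₂ ⟨hF₁, hY₁, hS₁⟩ ⟨hF₂, hY₂, hS₂⟩
    have hzero : ∀ {k : ℕ}, t • (0 : Fin k → ℝ) + (1 - t) • (0 : Fin k → ℝ) = 0 := by
      intro k; simp
    constructor
    · refine ⟨?_, ⟨?_, ?_⟩, ?_, ?_⟩
      · rw [hlin F]; exact hvle hF₁ hF₂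
      · rw [hlin E, ← hzero]; exact hvle hY₁.1 hY₂.1
      · intro i
        refine ⟨?_, ?_, ?_⟩
        · rw [hlin (V i), hlin (A + B * K), hlin F]
          exact hvle (hY₁.2 i).1 (hY₂.2 i).1
        · rw [hlin (V i)]
          exact hX (hY₁.2 i).2.1 (hY₂.2 i).2.1 ht0 ht1' (by ring)
        · rw [hlin (V i), hlin K]
          exact hU (hY₁.2 i).2.2 (hY₂.2 i).2.2 ht0 ht1' (by ring)
      · show E *ᵥ _ ≤ 0
        rw [hlin E, ← hzero]; exact hvle hS₁.1 hS₂.1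
      · intro i
        have htar : (t • ys₁ + (1 - t) • ys₂) +
            β • ((t • y₁ + (1 - t) • y₂) - (t • ys₁ + (1 - t) • ys₂))
            = t • (ys₁ + β • (y₁ - ys₁)) + (1 - t) • (ys₂ + β • (y₂ - ys₂)) := by
          ext j
          simp only [Pi.add_apply, Pi.smul_apply, Pi.sub_apply, smul_eq_mul]
          ring
        refine ⟨?_, ?_, ?_⟩
        · show F *ᵥ (A *ᵥ (V i *ᵥ _) + B *ᵥ _) ≤ _
          have harg : A *ᵥ (V i *ᵥ (t • y₁ + (1 - t) • y₂))
              + B *ᵥ (t • vv₁ i + (1 - t) • vv₂ i)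
              = t • (A *ᵥ (V i *ᵥ y₁) + B *ᵥ vv₁ i)
                + (1 - t) • (A *ᵥ (V i *ᵥ y₂) + B *ᵥ vv₂ i) := by
            rw [hlin (V i), hlin A, hlin B]
            ext j
            simp only [Pi.add_apply, Pi.smul_apply, smul_eq_mul]
            ring
          rw [harg, hlin F, htar]
          exact hvle (hS₁.2 i).1 (hS₂.2 i).1
        · show V i *ᵥ _ ∈ X
          rw [hlin (V i)]
          exact hX (hS₁.2 i).2.1 (hS₂.2 i).2.1 ht0 ht1' (by ring)
        · exact hU (hS₁.2 i).2.2 (hS₂.2 i).2.2 ht0 ht1' (by ring)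
    · have e1 : (t • y₁ + (1 - t) • y₂) - (t • ys₁ + (1 - t) • ys₂)
          = t • (y₁ - ys₁) + (1 - t) • (y₂ - ys₂) := by
        ext j
        simp only [Pi.add_apply, Pi.smul_apply, Pi.sub_apply, smul_eq_mul]
        ring
      have e2 : ∀ i, (t • vv₁ i + (1 - t) • vv₂ i)
            - K *ᵥ (V i *ᵥ (t • y₁ + (1 - t) • y₂))
          = t • (vv₁ i - K *ᵥ (V i *ᵥ y₁)) + (1 - t) • (vv₂ i - K *ᵥ (V i *ᵥ y₂)) := by
        intro i
        rw [hlin (V i), hlin K]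
        ext j
        simp only [Pi.add_apply, Pi.smul_apply, Pi.sub_apply, smul_eq_mul]
        ring
      have q1 := quad_conv hP x₁ x₂ ht0 ht1
      have q2 := quad_conv hΓ (y₁ - ys₁) (y₂ - ys₂) ht0 ht1
      have q4 : ∑ i : Fin nv, (((fun i => t • vv₁ i + (1 - t) • vv₂ i) i
              - K *ᵥ (V i *ᵥ (t • y₁ + (1 - t) • y₂))) ⬝ᵥ
            (Θ *ᵥ ((fun i => t • vv₁ i + (1 - t) • vv₂ i) i
              - K *ᵥ (V i *ᵥ (t • y₁ + (1 - t) • y₂)))))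
          ≤ t * ∑ i : Fin nv, ((vv₁ i - K *ᵥ (V i *ᵥ y₁)) ⬝ᵥ (Θ *ᵥ (vv₁ i - K *ᵥ (V i *ᵥ y₁))))
            + (1 - t) * ∑ i : Fin nv,
              ((vv₂ i - K *ᵥ (V i *ᵥ y₂)) ⬝ᵥ (Θ *ᵥ (vv₂ i - K *ᵥ (V i *ᵥ y₂)))) := by
        rw [Finset.mul_sum, Finset.mul_sum, ← Finset.sum_add_distrib]
        refine Finset.sum_le_sum fun i _ => ?_
        simp only
        rw [e2 i]
        exact quad_conv hΘ _ _ ht0 ht1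
      simp only [obj]
      rw [e1]
      linarith
  -- memberships
  have hxc : (t • x₁ + (1 - t) • x₂) ∈ TSet β A B K X U F E V := by
    obtain ⟨y₁, ys₁, vv₁, h₁⟩ : ∃ y ys vv, Feas x₁ y ys vv := hx₁
    obtain ⟨y₂, ys₂, vv₂, h₂⟩ : ∃ y ys vv, Feas x₂ y ys vv := hx₂
    obtain ⟨⟨a, b, c⟩, _⟩ := key y₁ ys₁ vv₁ y₂ ys₂ vv₂ h₁ h₂
    exact ⟨_, _, _, a, b, c⟩
  rw [hreal x₁ hx₁, hreal x₂ hx₂, hreal _ hxc]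
  rw [show ((t : ℝ) : EReal) * ((sInf (SR x₁) : ℝ) : EReal)
        + ((1 - t : ℝ) : EReal) * ((sInf (SR x₂) : ℝ) : EReal)
      = ((t * sInf (SR x₁) + (1 - t) * sInf (SR x₂) : ℝ) : EReal) by
    rw [EReal.coe_add, EReal.coe_mul, EReal.coe_mul]]
  rw [EReal.coe_le_coe_iff]
  have core : ∀ a ∈ SR x₁, ∀ b ∈ SR x₂,
      sInf (SR (t • x₁ + (1 - t) • x₂)) ≤ t * a + (1 - t) * b := by
    rintro a ⟨y₁, ys₁, vv₁, hf₁, rfl⟩ b ⟨y₂, ys₂, vv₂, hf₂, rfl⟩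
    obtain ⟨hfc, hoc⟩ := key y₁ ys₁ vv₁ y₂ ys₂ vv₂ hf₁ hf₂
    exact le_trans (csInf_le (hbdd _) ⟨_, _, _, hfc, rfl⟩) hoc
  by_contra hcon
  push_neg at hcon
  set ε := (sInf (SR (t • x₁ + (1 - t) • x₂))
    - (t * sInf (SR x₁) + (1 - t) * sInf (SR x₂))) / 2 with hε
  have hεpos : 0 < ε := by simp only [hε]; linarith
  obtain ⟨a, ha, halt⟩ := Real.lt_sInf_add_pos (hne x₁ hx₁) hεpos
  obtain ⟨b, hb, hblt⟩ := Real.lt_sInf_add_pos (hne x₂ hx₂) hεpos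
  have h1 := core a ha b hb
  have h2 := mul_le_mul_of_nonneg_left halt.le ht0
  have h3 := mul_le_mul_of_nonneg_left hblt.le ht1'
  nlinarith
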